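/- Let r ≥ 2 be an integer. For each k = 1,...,r, the vector w_k is an eigenvector of the transpose (M_2)^T corresponding to the eigenvalue μ_k = 2 − 2cos β_k; that is, (M_2)^T · w_k = μ_k · w_k. -/

import Mathlib

open Matrix Real BigOperators

noncomputable section

/-- The divisor-type matrix `M₂`: tridiagonal with diagonal `(1, 2, ..., 2)`,
superdiagonal entries `1`, subdiagonal entries `1` except the last one which is `2`
(0-based indexing). -/
def M2 (r : ℕ) : Matrix (Fin r) (Fin r) ℤ :=
  Matrix.of fun i j =>
    if i = j then (if (i : ℕ) = 0 then 1 else 2)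
    else if (i : ℕ) + 1 = (j : ℕ) then 1
    else if (j : ℕ) + 1 = (i : ℕ) then (if (i : ℕ) = r - 1 then 2 else 1)
    else 0

/-- `β_k = (2k - 2)π / (2r - 1)`. -/
def betaA (r k : ℕ) : ℝ := (2 * (k : ℝ) - 2) * Real.pi / (2 * (r : ℝ) - 1)

/-- The vector `w_k` whose `j`-th entry (1-based `j ≤ r - 1`) is
`(-1)^(r-j) · 2 cos((r-j) β_k)` and whose last entry is `1`; here 0-based indexing. -/
def wvec (r k : ℕ) : Fin r → ℝ :=
  fun j => if (j : ℕ) = r - 1 then 1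
    else (-1 : ℝ) ^ (r - 1 - (j : ℕ)) * (2 * Real.cos (((r - 1 - (j : ℕ) : ℕ) : ℝ) * betaA r k))

lemma aux_cos (β m : ℝ) :
    Real.cos ((m + 1) * β) + Real.cos ((m - 1) * β) = 2 * Real.cos β * Real.cos (m * β) := by
  rw [show (m + 1) * β = m * β + β by ring, show (m - 1) * β = m * β - β by ring,
    Real.cos_add, Real.cos_sub]
  ring

lemma boundary_cos (r k : ℕ) (hr : 2 ≤ r) :
    Real.cos ((r : ℝ) * betaA r k) = Real.cos (((r : ℝ) - 1) * betaA r k) := by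
  have h1 : (2 * (r : ℝ) - 1) ≠ 0 := by
    have : (2 : ℝ) ≤ (r : ℝ) := by exact_mod_cast hr
    nlinarith
  have h2 : (r : ℝ) * betaA r k = ((k : ℤ) - 1 : ℤ) * (2 * Real.pi) - ((r : ℝ) - 1) * betaA r k := by
    unfold betaA
    have h3 := mul_inv_cancel₀ h1
    push_cast
    linear_combination ((2 * (k : ℝ) - 2) * Real.pi) * h3
  rw [h2, Real.cos_int_mul_two_pi_sub]

/-- `w_k` is an eigenvector of `(M₂)ᵀ` with eigenvalue `μ_k = 2 - 2 cos β_k`. -/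
theorem M2_transpose_eigenvector (r : ℕ) (hr : 2 ≤ r) (k : ℕ) (hk1 : 1 ≤ k) (hk2 : k ≤ r) :
    (((M2 r).map (Int.cast : ℤ → ℝ)).transpose).mulVec (wvec r k) =
      (2 - 2 * Real.cos (betaA r k)) • wvec r k := by
  funext i
  obtain ⟨n, hn⟩ := i
  set β := betaA r k with hβ
  set v : ℕ → ℝ := fun m => if m = r - 1 then 1
      else (-1 : ℝ) ^ (r - 1 - m) * (2 * Real.cos (((r - 1 - m : ℕ) : ℝ) * β)) with hv
  have hRHS : ((2 - 2 * Real.cos β) • wvec r k) ⟨n, hn⟩ = (2 - 2 * Real.cos β) * v n := rfl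
  have key : (((M2 r).map (Int.cast : ℤ → ℝ)).transpose).mulVec (wvec r k) ⟨n, hn⟩
      = ∑ m ∈ Finset.range r,
        ((if m = n then (if m = 0 then (1 : ℝ) else 2) * v m else 0)
          + (if m + 1 = n then v m else 0)
          + (if n + 1 = m then (if m = r - 1 then (2 : ℝ) else 1) * v m else 0)) := by
    rw [Matrix.mulVec, ← Fin.sum_univ_eq_sum_range (fun m =>
        (if m = n then (if m = 0 then (1 : ℝ) else 2) * v m else 0)
          + (if m + 1 = n then v m else 0)
          + (if n + 1 = m then (if m = r - 1 then (2 : ℝ) else 1) * v m else 0)) r]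
    apply Finset.sum_congr rfl
    intro j _
    obtain ⟨p, hp⟩ := j
    simp only [dotProduct, Matrix.transpose_apply, Matrix.map_apply, M2, wvec, Matrix.of_apply,
      Fin.ext_iff, hv, apply_ite (Int.cast : ℤ → ℝ), Fin.val_mk]
    push_cast
    split_ifs <;> first | ring1 | omega | (exfalso; omega)
  rw [key, hRHS]
  simp only [Finset.sum_add_distrib]
  rw [Finset.sum_ite_eq' (Finset.range r) n (fun m => (if m = 0 then (1 : ℝ) else 2) * v m),
    Finset.sum_ite_eq (Finset.range r) (n + 1) (fun m => (if m = r - 1 then (2 : ℝ) else 1) * v m)]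
  have h2 : (∑ m ∈ Finset.range r, if m + 1 = n then v m else 0)
      = if 1 ≤ n then v (n - 1) else 0 := by
    rcases n with _ | s
    · simp
    · have : ∀ m, (m + 1 = s + 1) = (m = s) := by intro m; simp
      simp only [this]
      rw [Finset.sum_ite_eq' (Finset.range r) s v]
      simp [Finset.mem_range]
      omega
  rw [h2]
  simp only [Finset.mem_range, hn, if_true]
  -- now a pure computation with v
  by_cases hn0 : n = 0
  · subst hn0
    have hnr : 0 ≠ r - 1 := by omega
    by_cases hr2 : r = 2
    · subst hr2
      norm_num [hv]
      have hb : Real.cos ((2 : ℝ) * β) = Real.cos (((2 : ℝ) - 1) * β) := boundary_cos 2 k (by norm_num)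
      have hd : Real.cos (2 * β) = 2 * Real.cos β ^ 2 - 1 := Real.cos_two_mul β
      norm_num at hb
      nlinarith [hb, hd]
    · -- r ≥ 3
      have hr3 : 3 ≤ r := by omega
      have e1 : r - 1 - 0 = (r - 2) + 1 := by omega
      have e2 : r - 1 - 1 = r - 2 := by omega
      have h0r : ¬ (0 = r - 1) := by omega
      have h1r : ¬ (1 = r - 1) := by omega
      have h01 : (0 : ℕ) + 1 = 1 := rfl
      have h1lt : 1 < r := by omega
      simp only [hv, h0r, h1r, if_false, h01, if_true, h1lt, e1, e2]
      set a := r - 2 with ha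
      have H1 : Real.cos (((a : ℝ) + 1 + 1) * β) + Real.cos (((a : ℝ) + 1 - 1) * β)
          = 2 * Real.cos β * Real.cos (((a : ℝ) + 1) * β) := aux_cos β ((a : ℝ) + 1)
      have H2 : Real.cos (((a : ℝ) + 1 + 1) * β) = Real.cos (((a : ℝ) + 1) * β) := by
        have := boundary_cos r k hr
        rw [← hβ] at this
        have er : (r : ℝ) = (a : ℝ) + 2 := by
          rw [ha]; push_cast [Nat.cast_sub (by omega : 2 ≤ r)]; ring
        rw [er] at this
        convert this using 3 <;> ring
      have hpow : ((-1 : ℝ)) ^ (a + 1) = -(-1 : ℝ) ^ a := by rw [pow_succ]; ring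
      push_cast
      rw [hpow]
      set ε : ℝ := (-1 : ℝ) ^ a
      have e3 : ((a : ℝ) + 1 - 1) = (a : ℝ) := by ring
      rw [e3] at H1
      linear_combination (2 * ε) * H1 - (2 * ε) * H2
  · by_cases hnl : n = r - 1
    · subst hnl
      have h1 : 1 ≤ r - 1 := by omega
      have h2' : ¬ (r - 1 + 1 < r) := by omega
      have e1 : r - 1 - (r - 1 - 1) = 1 := by omega
      have hne : ¬ (r - 1 - 1 = r - 1) := by omega
      simp only [hv, if_pos rfl, h1, if_true, h2', if_false, hne, e1, hn0]
      norm_num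
      ring
    · -- interior: 1 ≤ n, n + 1 ≤ r - 1
      have hn1 : 1 ≤ n := by omega
      have hlt : n + 1 < r := by omega
      have hnr : ¬ (n = r - 1) := hnl
      have hnm1 : ¬ (n - 1 = r - 1) := by omega
      simp only [hv, hnr, if_false, hn1, if_true, hlt, hnm1, hn0]
      set m := r - 1 - n with hm
      have hm1 : 1 ≤ m := by omega
      have e1 : r - 1 - (n - 1) = m + 1 := by omega
      rw [e1]
      have hpow1 : ((-1 : ℝ)) ^ (m + 1) = -(-1 : ℝ) ^ m := by rw [pow_succ]; ring
      by_cases hc : n + 1 = r - 1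
      · -- m = 1
        have hm' : m = 1 := by omega
        have hd : Real.cos (2 * β) = 2 * Real.cos β ^ 2 - 1 := Real.cos_two_mul β
        simp only [hc, if_pos rfl, hm', hn0]
        norm_num
        linear_combination 2 * hd
      · have hm2 : 2 ≤ m := by omega
        have e2 : r - 1 - (n + 1) = m - 1 := by omega
        simp only [hc, if_false, e2]
        have hpow2 : ((-1 : ℝ)) ^ m = -(-1 : ℝ) ^ (m - 1) := by
          conv_lhs => rw [show m = (m - 1) + 1 by omega]
          rw [pow_succ]; ring
        have H1 : Real.cos (((m : ℝ) + 1) * β) + Real.cos (((m : ℝ) - 1) * β)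
            = 2 * Real.cos β * Real.cos ((m : ℝ) * β) := aux_cos β (m : ℝ)
        have ec : ((m - 1 : ℕ) : ℝ) = (m : ℝ) - 1 := by
          push_cast [Nat.cast_sub hm1]; ring
        push_cast
        rw [hpow1, hpow2, ec]
        set ε : ℝ := (-1 : ℝ) ^ (m - 1)
        linear_combination (2 * ε) * H1
  done
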